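/- arXiv:1406.3738 — 5 statements merged into one kernel-verified Lean document; each statement's English description precedes it below -/
import Mathlib

section
/- Let e : X ⊕ Y → X♯ be defined by e(x,y) = x + δ(y). Then e vanishes on the subgroup ⟨(nδ(y), −ny) : y ∈ Y⟩, descends to V = (X ⊕ Y)/⟨(nδ(y), −ny)⟩, and the induced map e : V → X♯ is surjective. -/
/- Setup: `Y` is a finitely generated free ℤ-module (a free abelian group of
finite rank), `Q : Y → ℤ` a quadratic form with polarization
`B y₁ y₂ = Q (y₁+y₂) - Q y₁ - Q y₂` (given as a bundled bilinear map), `n` a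
positive integer, and `β = B / n` the associated `(1/n)ℤ`-valued form. -/

variable {Y : Type} [AddCommGroup Y]

/-- `Y♯ = {y ∈ Y : β(y, y') ∈ ℤ for all y' ∈ Y}`, where `β = B/n`. -/
def Ysharp (B : Y →+ Y →+ ℤ) (n : ℕ) : AddSubgroup Y where
  carrier := {y | ∀ y' : Y, (n : ℤ) ∣ B y y'}
  zero_mem' := by intro y'; simp
  add_mem' := by
    intro a b ha hb y'
    rw [map_add, AddMonoidHom.add_apply]
    exact dvd_add (ha y') (hb y')
  neg_mem' := by
    intro a ha y'
    rw [map_neg, AddMonoidHom.neg_apply]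
    exact dvd_neg.mpr (ha y')

/-- `X = Hom(Y, ℤ)` viewed inside `Hom(Y, ℚ)`: the integer-valued homomorphisms. -/
def Xgrp (Y : Type) [AddCommGroup Y] : AddSubgroup (Y →+ ℚ) where
  carrier := {f | ∀ y : Y, ∃ k : ℤ, f y = (k : ℚ)}
  zero_mem' := by intro y; exact ⟨0, by simp⟩
  add_mem' := by
    intro f g hf hg y
    obtain ⟨a, ha⟩ := hf y
    obtain ⟨b, hb⟩ := hg y
    exact ⟨a + b, by simp [ha, hb]⟩
  neg_mem' := by
    intro f hf y
    obtain ⟨a, ha⟩ := hf y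
    exact ⟨-a, by simp [ha]⟩

/-- `δ : Y → Hom(Y, ℚ)`, `δ(y) = β(y, ·) = B(y, ·)/n`. -/
def delta (B : Y →+ Y →+ ℤ) (n : ℕ) : Y →+ (Y →+ ℚ) where
  toFun y := ((n : ℚ)⁻¹) • ((Int.castAddHom ℚ).comp (B y))
  map_zero' := by ext y'; simp
  map_add' a b := by
    ext y'
    simp [map_add, smul_eq_mul]
    ring

/-- `X♯ = {x ∈ (1/n)X : ⟨x, y⟩ ∈ ℤ for all y ∈ Y♯}` inside `Hom(Y, ℚ)`. -/
def Xsharp (B : Y →+ Y →+ ℤ) (n : ℕ) : AddSubgroup (Y →+ ℚ) where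
  carrier := {f | (∀ y : Y, ∃ k : ℤ, (n : ℚ) * f y = (k : ℚ)) ∧
      ∀ y ∈ Ysharp B n, ∃ k : ℤ, f y = (k : ℚ)}
  zero_mem' := ⟨fun y => ⟨0, by simp⟩, fun y _ => ⟨0, by simp⟩⟩
  add_mem' := by
    rintro f g ⟨hf1, hf2⟩ ⟨hg1, hg2⟩
    constructor
    · intro y
      obtain ⟨a, ha⟩ := hf1 y
      obtain ⟨b, hb⟩ := hg1 y
      exact ⟨a + b, by push_cast [AddMonoidHom.add_apply, mul_add, ha, hb]; ring⟩
    · intro y hy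
      obtain ⟨a, ha⟩ := hf2 y hy
      obtain ⟨b, hb⟩ := hg2 y hy
      exact ⟨a + b, by simp [ha, hb]⟩
  neg_mem' := by
    rintro f ⟨hf1, hf2⟩
    constructor
    · intro y
      obtain ⟨a, ha⟩ := hf1 y
      exact ⟨-a, by push_cast [AddMonoidHom.neg_apply, mul_neg, ha]; ring⟩
    · intro y hy
      obtain ⟨a, ha⟩ := hf2 y hy
      exact ⟨-a, by simp [ha]⟩

/-- The homomorphism `y ↦ (nδ(y), -ny) = (B(y,·), -ny)`; its range is the
subgroup of relations defining `V = (X ⊕ Y)/⟨(nδ(y), -ny) : y ∈ Y⟩`. -/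
def relHom (B : Y →+ Y →+ ℤ) (n : ℕ) : Y →+ (Y →+ ℤ) × Y :=
  AddMonoidHom.prod B (-(n • AddMonoidHom.id Y))

/-- The subgroup generated by the pairs `(nδ(y), -ny)` for `y ∈ Y`. -/
def Wgrp (B : Y →+ Y →+ ℤ) (n : ℕ) : AddSubgroup ((Y →+ ℤ) × Y) :=
  (relHom B n).range

/-- The inclusion `X = Hom(Y,ℤ) → Hom(Y,ℚ)`. -/
def castComp (Y : Type) [AddCommGroup Y] : (Y →+ ℤ) →+ (Y →+ ℚ) where
  toFun x := (Int.castAddHom ℚ).comp x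
  map_zero' := by ext y; simp
  map_add' a b := by ext y; simp

/-- `e : X ⊕ Y → Hom(Y,ℚ)`, `e(x, y) = x + δ(y)`. -/
def eMap (B : Y →+ Y →+ ℤ) (n : ℕ) : ((Y →+ ℤ) × Y) →+ (Y →+ ℚ) :=
  (castComp Y).comp (AddMonoidHom.fst (Y →+ ℤ) Y) +
    (delta B n).comp (AddMonoidHom.snd (Y →+ ℤ) Y)

open Function in
/-- Duality: for a finite `n`-torsion abelian group `K`,
`Hom(K, ZMod n)` has the same cardinality as `K`. -/
lemma card_hom_zmod {K : Type*} [AddCommGroup K] [Finite K] (n : ℕ) [NeZero n]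
    (hK : ∀ k : K, n • k = 0) : Nat.card (K →+ ZMod n) = Nat.card K := by
  classical
  have hinj : Injective (ZMod.stdAddChar (N := n)) := ZMod.injective_stdAddChar
  let Φ : (K →+ ZMod n) → AddChar K ℂ := fun f =>
    (ZMod.stdAddChar (N := n)).compAddMonoidHom f
  have hΦinj : Injective Φ := by
    intro f f' h
    ext k
    exact hinj (DFunLike.congr_fun h k)
  have hroot : ∀ z : ℂ, z ^ n = 1 → ∃ x : ZMod n, ZMod.stdAddChar x = z := by
    intro z hz
    obtain ⟨i, _, hi⟩ :=
      (Complex.isPrimitiveRoot_exp n (NeZero.ne n)).eq_pow_of_pow_eq_one hz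
    refine ⟨((i : ℤ) : ZMod n), ?_⟩
    rw [ZMod.stdAddChar_coe, ← hi, ← Complex.exp_nat_mul]
    push_cast
    ring_nf
  have hΦsurj : Surjective Φ := by
    intro ψ
    have hval : ∀ k : K, ∃ x : ZMod n, ZMod.stdAddChar x = ψ k := by
      intro k
      refine hroot _ ?_
      rw [← AddChar.map_nsmul_eq_pow, hK, AddChar.map_zero_eq_one]
    choose g hg using hval
    refine ⟨{ toFun := g, map_zero' := ?_, map_add' := ?_ }, ?_⟩
    · show g 0 = 0
      apply hinj
      rw [hg, AddChar.map_zero_eq_one, AddChar.map_zero_eq_one]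
    · intro a b
      show g (a + b) = g a + g b
      apply hinj
      rw [hg, AddChar.map_add_eq_mul, ← hg, ← hg, AddChar.map_add_eq_mul]
    · ext k
      exact hg k
  have := Fintype.ofFinite K
  calc Nat.card (K →+ ZMod n) = Nat.card (AddChar K ℂ) :=
        Nat.card_eq_of_bijective Φ ⟨hΦinj, hΦsurj⟩
    _ = Nat.card K := by
        simp only [Nat.card_eq_fintype_card, AddChar.card_eq]

/-- Homs from a finitely generated free `ℤ`-module to a finite group form a finite type. -/
lemma finite_hom_aux {Y : Type} [AddCommGroup Y] [Module.Free ℤ Y] [Module.Finite ℤ Y]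
    (A : Type*) [AddCommGroup A] [Finite A] : Finite (Y →+ A) := by
  let b := Module.Free.chooseBasis ℤ Y
  refine Finite.of_injective (fun f : Y →+ A => fun i => f (b i)) ?_
  intro f g h
  have h2 : f.toIntLinearMap = g.toIntLinearMap := b.ext fun i => congr_fun h i
  ext y
  exact DFunLike.congr_fun (congrArg LinearMap.toAddMonoidHom h2) y

/-- The key duality step: a functional `Y → ZMod n` vanishing on the kernel of a
symmetric pairing `ad` lies in the range of `ad`. -/
lemma ann_le_range_aux {Y : Type} [AddCommGroup Y] [Module.Free ℤ Y] [Module.Finite ℤ Y]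
    (n : ℕ) [NeZero n] (ad : Y →+ (Y →+ ZMod n))
    (hsymm : ∀ a b : Y, ad a b = ad b a)
    (g : Y →+ ZMod n) (hg : ∀ y ∈ ad.ker, g y = 0) :
    ∃ y₀ : Y, ad y₀ = g := by
  have hfin : Finite (Y →+ ZMod n) := finite_hom_aux _
  let e1 := QuotientAddGroup.quotientKerEquivRange ad
  have hKfin : Finite (Y ⧸ ad.ker) := Finite.of_equiv _ e1.symm.toEquiv
  have hKtor : ∀ k : Y ⧸ ad.ker, n • k = 0 := by
    intro k
    induction k using QuotientAddGroup.induction_on with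
    | H y =>
      rw [← QuotientAddGroup.mk_nsmul, QuotientAddGroup.eq_zero_iff]
      rw [AddMonoidHom.mem_ker, map_nsmul]
      ext y'
      simp [nsmul_eq_mul, ZMod.natCast_self]
  let C : AddSubgroup (Y →+ ZMod n) :=
    { carrier := {h | ∀ y ∈ ad.ker, h y = 0}
      zero_mem' := fun y _ => rfl
      add_mem' := by
        intro a b ha hb y hy
        rw [AddMonoidHom.add_apply, ha y hy, hb y hy, add_zero]
      neg_mem' := by
        intro a ha y hy
        rw [AddMonoidHom.neg_apply, ha y hy, neg_zero] }
  have hAC : ad.range ≤ C := by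
    rintro _ ⟨a, rfl⟩ y hy
    rw [hsymm a y, AddMonoidHom.mem_ker.mp hy]
    rfl
  let eC : C ≃ ((Y ⧸ ad.ker) →+ ZMod n) :=
    { toFun := fun h => QuotientAddGroup.lift ad.ker h.1 h.2
      invFun := fun F => ⟨F.comp (QuotientAddGroup.mk' ad.ker), fun y hy => by
        simp [(QuotientAddGroup.eq_zero_iff y).mpr hy]⟩
      left_inv := fun h => by ext y; simp; rfl
      right_inv := fun F => by
        ext k
        simp
        rfl }
  have hcard : Nat.card C = Nat.card ad.range := by
    rw [Nat.card_congr eC, card_hom_zmod n hKtor]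
    exact Nat.card_congr e1.toEquiv
  have hset : (ad.range : Set (Y →+ ZMod n)) = (C : Set (Y →+ ZMod n)) := by
    apply Set.eq_of_subset_of_ncard_le hAC
    · rw [← Nat.card_coe_set_eq, ← Nat.card_coe_set_eq]
      exact hcard.le
  have hgC : g ∈ ad.range := by
    rw [← SetLike.mem_coe, hset]
    exact hg
  exact hgC

lemma eMap_apply_aux (B : Y →+ Y →+ ℤ) (n : ℕ) (p : (Y →+ ℤ) × Y) (y' : Y) :
    eMap B n p y' = (p.1 y' : ℚ) + (n : ℚ)⁻¹ * (B p.2 y' : ℚ) := by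
  simp [eMap, castComp, delta, AddMonoidHom.add_apply, smul_eq_mul]

/-- `e(x,y) = x + δ(y)` vanishes on the relation subgroup
`⟨(nδ(y), -ny)⟩` (hence descends to `V`), takes values in `X♯`, and the
induced map `e : V → X♯` is surjective. -/
theorem covers_of_tori_stmt6 [Module.Free ℤ Y] [Module.Finite ℤ Y]
    (Q : Y → ℤ) (B : Y →+ Y →+ ℤ)
    (hQB : ∀ y₁ y₂ : Y, B y₁ y₂ = Q (y₁ + y₂) - Q y₁ - Q y₂)
    (hQ : ∀ (m : ℤ) (y : Y), Q (m • y) = m ^ 2 * Q y)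
    (n : ℕ) (hn : 0 < n) :
    (∀ p ∈ Wgrp B n, eMap B n p = 0) ∧
    (∀ p : (Y →+ ℤ) × Y, eMap B n p ∈ Xsharp B n) ∧
    (∀ f ∈ Xsharp B n, ∃ p : (Y →+ ℤ) × Y, eMap B n p = f) := by
  have hnQ : (n : ℚ) ≠ 0 := Nat.cast_ne_zero.mpr hn.ne'
  have : NeZero n := ⟨hn.ne'⟩
  have hBsymm : ∀ a b : Y, B a b = B b a := fun a b => by
    rw [hQB, hQB, add_comm]
    ring
  refine ⟨?_, ?_, ?_⟩
  · rintro _ ⟨y, rfl⟩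
    ext y'
    have h1 : relHom B n y = (B y, -(n • y)) := by
      simp [relHom]
    rw [h1, eMap_apply_aux]
    have h2 : B (-(n • y)) y' = -((n : ℤ) * B y y') := by
      rw [map_neg, AddMonoidHom.neg_apply, map_nsmul]
      simp [nsmul_eq_mul]
    rw [h2]
    push_cast
    field_simp
    ring
    rfl
  · intro p
    constructor
    · intro y
      refine ⟨n * p.1 y + B p.2 y, ?_⟩
      rw [eMap_apply_aux]
      push_cast
      field_simp
    · intro y hy
      have hdvd : (n : ℤ) ∣ B p.2 y := by
        rw [hBsymm]
        exact hy p.2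
      obtain ⟨k, hk⟩ := hdvd
      refine ⟨p.1 y + k, ?_⟩
      rw [eMap_apply_aux, hk]
      push_cast
      field_simp
  · rintro f ⟨hf1, hf2⟩
    choose gk hgk using hf1
    have hgkadd : ∀ a b : Y, gk (a + b) = gk a + gk b := by
      intro a b
      have : ((gk (a + b) : ℤ) : ℚ) = ((gk a + gk b : ℤ) : ℚ) := by
        rw [← hgk, map_add]
        push_cast
        rw [← hgk, ← hgk]
        ring
      exact_mod_cast this
    have hgkzero : gk 0 = 0 := by
      have : ((gk 0 : ℤ) : ℚ) = ((0 : ℤ) : ℚ) := by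
        rw [← hgk]; simp
      exact_mod_cast this
    let g : Y →+ ℤ := { toFun := gk, map_zero' := hgkzero, map_add' := hgkadd }
    let ad : Y →+ (Y →+ ZMod n) :=
      { toFun := fun y => (Int.castAddHom (ZMod n)).comp (B y)
        map_zero' := by ext y'; simp
        map_add' := fun a b => by ext y'; simp }
    have had_apply : ∀ a b : Y, ad a b = ((B a b : ℤ) : ZMod n) := fun a b => rfl
    have hker : ∀ y : Y, y ∈ ad.ker ↔ y ∈ Ysharp B n := by
      intro y
      rw [AddMonoidHom.mem_ker]
      constructor
      · intro h y'
        have := DFunLike.congr_fun h y'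
        rw [had_apply] at this
        exact (ZMod.intCast_zmod_eq_zero_iff_dvd _ _).mp this
      · intro h
        ext y'
        rw [had_apply]
        simpa using (ZMod.intCast_zmod_eq_zero_iff_dvd _ _).mpr (h y')
    have hsymm : ∀ a b : Y, ad a b = ad b a := fun a b => by
      rw [had_apply, had_apply, hBsymm]
    let gbar : Y →+ ZMod n := (Int.castAddHom (ZMod n)).comp g
    have hgbar : ∀ y ∈ ad.ker, gbar y = 0 := by
      intro y hy
      obtain ⟨k, hk⟩ := hf2 y ((hker y).mp hy)
      have hgy : gk y = n * k := by
        have : ((gk y : ℤ) : ℚ) = (((n : ℤ) * k : ℤ) : ℚ) := by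
          rw [← hgk, hk]; push_cast; ring
        exact_mod_cast this
      show ((gk y : ℤ) : ZMod n) = 0
      rw [hgy]
      push_cast
      simp
    obtain ⟨y₀, hy₀⟩ := ann_le_range_aux n ad hsymm gbar hgbar
    have hdvd : ∀ y' : Y, (n : ℤ) ∣ gk y' - B y₀ y' := by
      intro y'
      have := DFunLike.congr_fun hy₀ y'
      rw [had_apply] at this
      have h0 : ((gk y' - B y₀ y' : ℤ) : ZMod n) = 0 := by
        push_cast
        rw [show ((gk y' : ℤ) : ZMod n) = gbar y' from rfl, ← this]
        ring
      exact (ZMod.intCast_zmod_eq_zero_iff_dvd _ _).mp h0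
    choose c hc using hdvd
    have hnZ : (n : ℤ) ≠ 0 := Int.natCast_ne_zero.mpr hn.ne'
    have hcadd : ∀ a b : Y, c (a + b) = c a + c b := by
      intro a b
      apply mul_left_cancel₀ hnZ
      have h1 := hc (a + b)
      have h2 := hc a
      have h3 := hc b
      rw [hgkadd, map_add] at h1
      rw [← h1, mul_add, ← h2, ← h3]
      ring
    have hczero : c 0 = 0 := by
      apply mul_left_cancel₀ hnZ
      have h1 := hc 0
      rw [hgkzero, map_zero] at h1
      rw [← h1]
      ring
    let x : Y →+ ℤ := { toFun := c, map_zero' := hczero, map_add' := hcadd }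
    refine ⟨(x, y₀), ?_⟩
    ext y'
    rw [eMap_apply_aux]
    have hfy : f y' = (gk y' : ℚ) / n := by
      rw [← hgk]
      field_simp
    have hgc : (gk y' : ℚ) = n * c y' + B y₀ y' := by
      have := hc y'
      have h2 : (gk y' : ℤ) = n * c y' + B y₀ y' := by linarith [hc y']
      exact_mod_cast h2
    show (c y' : ℚ) + (n : ℚ)⁻¹ * (B y₀ y' : ℚ) = f y'
    rw [hfy, hgc]
    field_simp
end

section
/- With V and e : V → X♯ as above, the kernel of e is isomorphic to Y♯/nY, via the map sending y♯ ∈ Y♯ to the class of (δ(y♯), −y♯) in V. In particular there is a short exact sequence 0 → Y♯/nY → V → X♯ → 0. -/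
/- Setup: `Y` is a finitely generated free ℤ-module (a free abelian group of
finite rank), `Q : Y → ℤ` a quadratic form with polarization
`B y₁ y₂ = Q (y₁+y₂) - Q y₁ - Q y₂` (given as a bundled bilinear map), `n` a
positive integer, and `β = B / n` the associated `(1/n)ℤ`-valued form. -/

variable {Y : Type} [AddCommGroup Y]

/-- The induced map `e : V → Hom(Y,ℚ)` on `V = (X ⊕ Y)/⟨(nδ(y), -ny)⟩`. -/
def ebar (B : Y →+ Y →+ ℤ) (n : ℕ) (hn : 0 < n) :
    (((Y →+ ℤ) × Y) ⧸ Wgrp B n) →+ (Y →+ ℚ) :=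
  QuotientAddGroup.lift (Wgrp B n) (eMap B n) (by
    rintro p ⟨y, rfl⟩
    ext y'
    have hn0 : (n : ℚ) ≠ 0 := Nat.cast_ne_zero.mpr hn.ne'
    simp [eMap, relHom, castComp, delta, smul_eq_mul]
    field_simp
    ring)

/-- the kernel of `e : V → X♯` is isomorphic to `Y♯/nY`, via
`y♯ ↦ [(δ(y♯), -y♯)]`.  Concretely: for `y ∈ Y♯` and `x ∈ X = Hom(Y,ℤ)`
representing `δ(y)`, the class of `(x, -y)` lies in `ker e`; every element of
`ker e` is of this form; and the class of `(x, -y)` vanishes in `V` iff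
`y ∈ nY`.  In particular `0 → Y♯/nY → V → X♯ → 0` is exact. -/
theorem covers_of_tori_stmt7 [Module.Free ℤ Y] [Module.Finite ℤ Y]
    (Q : Y → ℤ) (B : Y →+ Y →+ ℤ)
    (hQB : ∀ y₁ y₂ : Y, B y₁ y₂ = Q (y₁ + y₂) - Q y₁ - Q y₂)
    (hQ : ∀ (m : ℤ) (y : Y), Q (m • y) = m ^ 2 * Q y)
    (n : ℕ) (hn : 0 < n) :
    (∀ y ∈ Ysharp B n, ∀ x : Y →+ ℤ,
      (∀ y' : Y, ((x y' : ℤ) : ℚ) = delta B n y y') →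
        (QuotientAddGroup.mk (x, -y) : ((Y →+ ℤ) × Y) ⧸ Wgrp B n) ∈
          (ebar B n hn).ker) ∧
    (∀ v ∈ (ebar B n hn).ker, ∃ y ∈ Ysharp B n, ∃ x : Y →+ ℤ,
      (∀ y' : Y, ((x y' : ℤ) : ℚ) = delta B n y y') ∧
        (QuotientAddGroup.mk (x, -y) : ((Y →+ ℤ) × Y) ⧸ Wgrp B n) = v) ∧
    (∀ y ∈ Ysharp B n, ∀ x : Y →+ ℤ,
      (∀ y' : Y, ((x y' : ℤ) : ℚ) = delta B n y y') →
        ((QuotientAddGroup.mk (x, -y) : ((Y →+ ℤ) × Y) ⧸ Wgrp B n) = 0 ↔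
          ∃ z : Y, y = n • z)) := by
  have hn0 : (n : ℚ) ≠ 0 := Nat.cast_ne_zero.mpr hn.ne'
  refine ⟨?_, ?_, ?_⟩
  · intro y _ x hx
    rw [AddMonoidHom.mem_ker]
    show eMap B n (x, -y) = 0
    ext y'
    have := hx y'
    simp [eMap, castComp, delta, smul_eq_mul] at this ⊢
    simp [this]
  · intro v hv
    obtain ⟨⟨x, y⟩, rfl⟩ := QuotientAddGroup.mk_surjective v
    rw [AddMonoidHom.mem_ker] at hv
    have hv' : eMap B n (x, y) = 0 := hv
    have key : ∀ y' : Y, ((x y' : ℤ) : ℚ) = -((n : ℚ)⁻¹ * (B y y' : ℚ)) := by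
      intro y'
      have := congrArg (fun f => f y') hv'
      simp [eMap, castComp, delta, smul_eq_mul] at this
      linarith
    refine ⟨-y, ?_, x, ?_, by simp⟩
    · intro y'
      have h := key y'
      refine ⟨x y', ?_⟩
      have : ((B (-y) y' : ℤ) : ℚ) = (n : ℚ) * ((x y' : ℤ) : ℚ) := by
        rw [h]
        push_cast
        field_simp
        ring
        simp
      exact_mod_cast this
    · intro y'
      have h := key y'
      simp only [delta, AddMonoidHom.coe_mk, ZeroHom.coe_mk, map_neg,
        AddMonoidHom.smul_apply, AddMonoidHom.neg_apply, AddMonoidHom.coe_comp,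
        Function.comp_apply, Int.coe_castAddHom, smul_eq_mul, mul_neg]
      rw [h]
  · intro y hy x hx
    rw [QuotientAddGroup.eq_zero_iff]
    constructor
    · rintro ⟨z, hz⟩
      simp [relHom, Prod.ext_iff] at hz
      exact ⟨z, hz.2.symm⟩
    · rintro ⟨z, rfl⟩
      refine ⟨z, ?_⟩
      simp only [relHom, AddMonoidHom.prod_apply, AddMonoidHom.neg_apply,
        AddMonoidHom.coe_smul, AddMonoidHom.id_apply, Prod.mk.injEq]
      constructor
      · ext y'
        have h := hx y'
        have hB : B (n • z) y' = (n : ℤ) * B z y' := by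
          simp [map_nsmul, nsmul_eq_mul]
        have hd : delta B n (n • z) y' = (B z y' : ℚ) := by
          simp only [delta, AddMonoidHom.coe_mk, ZeroHom.coe_mk,
            AddMonoidHom.smul_apply, AddMonoidHom.coe_comp, Function.comp_apply,
            Int.coe_castAddHom, smul_eq_mul, hB]
          push_cast
          field_simp
        have : ((x y' : ℤ) : ℚ) = ((B z y' : ℤ) : ℚ) := by rw [h, hd]
        exact_mod_cast this.symm
      · simp
end

section
/- Let G be a finite group, Z = Z(G) its center, and suppose G/Z admits a Lagrangian decomposition: G/Z ≅ L × L* where the commutator pairing c : G/Z × G/Z → ℂˣ restricts trivially to L × L and to L* × L*, and identifies L* with Hom(L, ℂˣ). Let χ : Z → ℂˣ be a character injective on the commutator subgroup [G,G] ⊆ Z, let M be the preimage of L in G (an abelian subgroup), and let χ_M be any extension of χ to M. Then the induced representation Ind_M^G χ_M is irreducible. -/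
open Subgroup
open scoped commutatorElement

/-- The space of the induced representation `Ind_M^G χ_M`: functions
`φ : G → ℂ` with `φ(mg) = χ_M(m)·φ(g)` for `m ∈ M`.  The group `G` acts by
right translation. -/
noncomputable def indSpace (G : Type) [Group G] (M : Subgroup G) (χM : M →* ℂˣ) :
    Submodule ℂ (G → ℂ) where
  carrier := {φ | ∀ (m : M) (g : G), φ ((m : G) * g) = (χM m : ℂ) * φ g}
  zero_mem' := by intro m g; simp
  add_mem' := by
    intro a b ha hb m g
    simp only [Pi.add_apply, ha m g, hb m g]
    ring
  smul_mem' := by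
    intro c a ha m g
    simp only [Pi.smul_apply, smul_eq_mul, ha m g]
    ring


lemma svn_sum_char_eq_zero {H : Type*} [Group H] [Fintype H] (ψ : H → ℂ)
    (hmul : ∀ a b : H, ψ (a * b) = ψ a * ψ b) {b : H} (hb : ψ b ≠ 1) :
    ∑ a : H, ψ a = 0 := by
  have h2 : ∑ a : H, ψ (b * a) = ∑ a : H, ψ a :=
    Fintype.sum_equiv (Equiv.mulLeft b) _ _ (fun a => rfl)
  have h1 : ∑ a : H, ψ (b * a) = ψ b * ∑ a : H, ψ a := by
    rw [Finset.mul_sum]; exact Finset.sum_congr rfl (fun a _ => hmul b a)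
  have h3 : (ψ b - 1) * (∑ a : H, ψ a) = 0 := by
    rw [sub_mul, one_mul, ← h1, h2, sub_self]
  rcases mul_eq_zero.mp h3 with h | h
  · exact absurd (by linear_combination h) hb
  · exact h

open scoped Classical in
noncomputable def deltaFun {G : Type} [Group G] (M : Subgroup G) (χM : M →* ℂˣ) (g : G) :
    G → ℂ := fun x => if h : x * g⁻¹ ∈ M then (χM ⟨x * g⁻¹, h⟩ : ℂ) else 0

lemma deltaFun_mem {G : Type} [Group G] (M : Subgroup G) (χM : M →* ℂˣ) (g : G) :
    deltaFun M χM g ∈ indSpace G M χM := by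
  intro m x
  unfold deltaFun
  have hiff : (m : G) * x * g⁻¹ ∈ M ↔ x * g⁻¹ ∈ M := by
    rw [mul_assoc]; exact mul_mem_cancel_left m.2
  by_cases h : x * g⁻¹ ∈ M
  · rw [dif_pos (hiff.mpr h), dif_pos h]
    have : (⟨(m : G) * x * g⁻¹, hiff.mpr h⟩ : M) = m * ⟨x * g⁻¹, h⟩ := by
      ext; simp [mul_assoc]
    rw [this, map_mul]; push_cast; ring
  · rw [dif_neg (fun hh => h (hiff.mp hh)), dif_neg h, mul_zero]

/-- finite-group Stone–von Neumann: let `G` be a finite group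
whose commutators are central, `Z = Z(G)`, with a Lagrangian decomposition
`G/Z = L × L*` for the commutator pairing `c(g,h) = χ([g,h])`, where
`χ : Z → ℂˣ` is injective on `[G,G] ⊆ Z`.  Let `M` be the preimage of `L`
in `G` and `χ_M` any extension of `χ` to `M`.  Then the induced representation
`Ind_M^G χ_M` (realized on `indSpace G M χM` with the right-translation
action) is irreducible. -/
theorem covers_of_tori_stmt10 (G : Type) [Group G] [Finite G]
    (hGZ : ∀ g h : G, ⁅g, h⁆ ∈ Subgroup.center G)
    (χ : Subgroup.center G →* ℂˣ)
    (hχinj : ∀ z : Subgroup.center G,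
      (z : G) ∈ commutator G → χ z = 1 → (z : G) = 1)
    (c : G → G → ℂˣ)
    (hc : ∀ g h : G, c g h = χ ⟨⁅g, h⁆, hGZ g h⟩)
    (L Lstar : Subgroup (G ⧸ Subgroup.center G))
    -- `c` restricts trivially to `L × L` and to `L* × L*`:
    (htrivL : ∀ g h : G, (g : G ⧸ Subgroup.center G) ∈ L →
      (h : G ⧸ Subgroup.center G) ∈ L → c g h = 1)
    (htrivLs : ∀ g h : G, (g : G ⧸ Subgroup.center G) ∈ Lstar →
      (h : G ⧸ Subgroup.center G) ∈ Lstar → c g h = 1)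
    -- `G/Z = L · L*`:
    (hprod : ∀ q : G ⧸ Subgroup.center G, ∃ a b : G,
      (a : G ⧸ Subgroup.center G) ∈ L ∧ (b : G ⧸ Subgroup.center G) ∈ Lstar ∧
        q = ((a * b : G) : G ⧸ Subgroup.center G))
    -- `c` identifies `L*` with `Hom(L, ℂˣ)`:
    (hdualinj : ∀ b b' : G, (b : G ⧸ Subgroup.center G) ∈ Lstar →
      (b' : G ⧸ Subgroup.center G) ∈ Lstar →
      (∀ a : G, (a : G ⧸ Subgroup.center G) ∈ L → c a b = c a b') →
      (b : G ⧸ Subgroup.center G) = (b' : G ⧸ Subgroup.center G))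
    (hdualsurj : ∀ φ : L →* ℂˣ, ∃ b : G,
      (b : G ⧸ Subgroup.center G) ∈ Lstar ∧
      ∀ (a : G) (ha : (a : G ⧸ Subgroup.center G) ∈ L),
        c a b = φ ⟨(a : G ⧸ Subgroup.center G), ha⟩)
    -- `M` is the preimage of `L` in `G`:
    (M : Subgroup G)
    (hM : M = Subgroup.comap (QuotientGroup.mk' (Subgroup.center G)) L)
    -- `χ_M` is an extension of `χ` to `M`:
    (χM : M →* ℂˣ)
    (hext : ∀ (z : G) (hz : z ∈ Subgroup.center G) (hzM : z ∈ M),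
      χM ⟨z, hzM⟩ = χ ⟨z, hz⟩) :
    indSpace G M χM ≠ ⊥ ∧
    ∀ U : Submodule ℂ (G → ℂ), U ≤ indSpace G M χM →
      (∀ g : G, ∀ φ ∈ U, (fun x => φ (x * g)) ∈ U) →
      U = ⊥ ∨ U = indSpace G M χM := by
  classical
  cases nonempty_fintype G
  have hmemM : ∀ x : G, x ∈ M ↔ (x : G ⧸ Subgroup.center G) ∈ L := by
    intro x; rw [hM, Subgroup.mem_comap, QuotientGroup.mk'_apply]
  have hZM : ∀ z : G, z ∈ Subgroup.center G → z ∈ M := by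
    intro z hz
    rw [hmemM]
    rw [(QuotientGroup.eq_one_iff z).mpr hz]
    exact one_mem L
  have comm_central : ∀ g h x : G, x * ⁅g, h⁆ = ⁅g, h⁆ * x :=
    fun g h x => Subgroup.mem_center_iff.mp (hGZ g h) x
  have comm_mul_left : ∀ g h a : G, ⁅g * h, a⁆ = ⁅g, a⁆ * ⁅h, a⁆ := by
    intro g h a
    have h1 : ⁅g * h, a⁆ = g * ⁅h, a⁆ * g⁻¹ * ⁅g, a⁆ := by group
    rw [h1, comm_central h a g,
      show ⁅h, a⁆ * g * g⁻¹ * ⁅g, a⁆ = ⁅h, a⁆ * ⁅g, a⁆ from by group]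
    exact comm_central g a ⁅h, a⁆
  have c_mul_left : ∀ g h a : G, c (g * h) a = c g a * c h a := by
    intro g h a
    rw [hc, hc, hc, ← map_mul]
    congr 1
    exact Subtype.ext (comm_mul_left g h a)
  have c_swap : ∀ g h : G, c g h = (c h g)⁻¹ := by
    intro g h
    rw [hc, hc, ← map_inv]
    congr 1
    exact Subtype.ext (commutatorElement_inv h g).symm
  have c_mul_right : ∀ g a b : G, c g (a * b) = c g a * c g b := by
    intro g a b
    rw [c_swap g (a * b), c_mul_left a b g, mul_inv, ← c_swap g a, ← c_swap g b]
  have c_central : ∀ z a : G, z ∈ Subgroup.center G → c z a = 1 := by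
    intro z a hz
    have h1 : ⁅z, a⁆ = 1 := by
      have h2 := Subgroup.mem_center_iff.mp hz a
      rw [commutatorElement_def, ← h2]
      group
    rw [hc, show (⟨⁅z, a⁆, hGZ z a⟩ : Subgroup.center G) = 1 from Subtype.ext h1, map_one]
  have hTrans : ∀ φ : G → ℂ, φ ∈ indSpace G M χM → ∀ (g a : G) (ha : a ∈ M),
      φ (g * a) = (c g a : ℂ) * ((χM ⟨a, ha⟩ : ℂ) * φ g) := by
    intro φ hφ g a ha
    have h2 := hφ ⟨⁅g, a⁆, hZM _ (hGZ g a)⟩ (a * g)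
    have h3 := hφ ⟨a, ha⟩ g
    have h1 : φ (g * a) = φ (((⟨⁅g, a⁆, hZM _ (hGZ g a)⟩ : M) : G) * (a * g)) := by
      congr 1
      show g * a = ⁅g, a⁆ * (a * g)
      group
    rw [h1, h2, show ((⟨a, ha⟩ : M) : G) * g = a * g from rfl] at *
    rw [h3, hext ⁅g, a⁆ (hGZ g a) (hZM _ (hGZ g a)), hc]
  have hnondeg : ∀ x g : G, (∀ a : G, a ∈ M → c x a = c g a) → x * g⁻¹ ∈ M := by
    intro x g hxg
    obtain ⟨a, b, haL, hbL, hab⟩ := hprod (x : G ⧸ Subgroup.center G)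
    obtain ⟨a', b', haL', hbL', hab'⟩ := hprod (g : G ⧸ Subgroup.center G)
    obtain ⟨z, hzc, hxz⟩ : ∃ z, z ∈ Subgroup.center G ∧ x = a * b * z := by
      refine ⟨(a * b)⁻¹ * x, ?_, by group⟩
      rw [← QuotientGroup.eq]
      exact hab.symm
    obtain ⟨z', hzc', hgz⟩ : ∃ z', z' ∈ Subgroup.center G ∧ g = a' * b' * z' := by
      refine ⟨(a' * b')⁻¹ * g, ?_, by group⟩
      rw [← QuotientGroup.eq]
      exact hab'.symm
    have hxdec : ∀ m : G, m ∈ M → c x m = c b m := by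
      intro m hm
      rw [hxz, c_mul_left, c_mul_left, c_central z m hzc,
        htrivL a m haL ((hmemM m).mp hm), one_mul, mul_one]
    have hgdec : ∀ m : G, m ∈ M → c g m = c b' m := by
      intro m hm
      rw [hgz, c_mul_left, c_mul_left, c_central z' m hzc',
        htrivL a' m haL' ((hmemM m).mp hm), one_mul, mul_one]
    have hbb' : (b : G ⧸ Subgroup.center G) = (b' : G ⧸ Subgroup.center G) := by
      refine hdualinj b b' hbL hbL' (fun w hw => ?_)
      have hwM : w ∈ M := (hmemM w).mpr hw
      rw [c_swap w b, c_swap w b', ← hxdec w hwM, ← hgdec w hwM, hxg w hwM]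
    rw [hmemM]
    have e1 : (x : G ⧸ Subgroup.center G) = (a : G ⧸ Subgroup.center G) * (b' : G ⧸ Subgroup.center G) := by
      rw [hab, QuotientGroup.mk_mul, hbb']
    have e2 : (g : G ⧸ Subgroup.center G) = (a' : G ⧸ Subgroup.center G) * (b' : G ⧸ Subgroup.center G) := by
      rw [hab', QuotientGroup.mk_mul]
    have e3 : ((x * g⁻¹ : G) : G ⧸ Subgroup.center G)
        = (a : G ⧸ Subgroup.center G) * ((a' : G ⧸ Subgroup.center G))⁻¹ := by
      rw [QuotientGroup.mk_mul, QuotientGroup.mk_inv, e1, e2]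
      group
    rw [e3]
    exact mul_mem haL (inv_mem haL')
  constructor
  · intro hbot
    have h1 : deltaFun M χM 1 ∈ indSpace G M χM := deltaFun_mem M χM 1
    rw [hbot, Submodule.mem_bot] at h1
    have h2 : deltaFun M χM 1 1 = 1 := by
      unfold deltaFun
      rw [dif_pos (show (1 : G) * 1⁻¹ ∈ M from by simpa using one_mem M)]
      rw [show (⟨(1 : G) * 1⁻¹, _⟩ : M) = 1 from Subtype.ext (by simp), map_one, Units.val_one]
    rw [h1] at h2
    simp at h2
  · intro U hUle hUinv
    by_cases hU : U = ⊥
    · exact Or.inl hU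
    right
    obtain ⟨φ, hφU, hφne⟩ := (Submodule.ne_bot_iff U).mp hU
    have hφind : φ ∈ indSpace G M χM := hUle hφU
    obtain ⟨g, hg⟩ : ∃ g : G, φ g ≠ 0 := by
      by_contra h
      push_neg at h
      exact hφne (funext fun x => h x)
    have hdg : deltaFun M χM g ∈ U := by
      set ψ : G → ℂ :=
        ∑ a : M, (((c g (a : G) * χM a : ℂˣ) : ℂ)⁻¹ • fun x => φ (x * (a : G))) with hψdef
      have hψU : ψ ∈ U :=
        Submodule.sum_mem U (fun a _ => Submodule.smul_mem U _ (hUinv (a : G) φ hφU))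
      have hψeq : ψ = ((Fintype.card M : ℂ) * φ g) • deltaFun M χM g := by
        funext x
        have hψx : ψ x = (∑ a : M, ((c x (a : G) * (c g (a : G))⁻¹ : ℂˣ) : ℂ)) * φ x := by
          rw [hψdef, Finset.sum_apply, Finset.sum_mul]
          refine Finset.sum_congr rfl (fun a _ => ?_)
          rw [Pi.smul_apply, smul_eq_mul, hTrans φ hφind x (a : G) a.2]
          have n1 : ((χM a : ℂˣ) : ℂ) ≠ 0 := Units.ne_zero _
          have n2 : ((c g (a : G) : ℂˣ) : ℂ) ≠ 0 := Units.ne_zero _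
          push_cast
          field_simp
        by_cases hxg : x * g⁻¹ ∈ M
        · have hone : ∀ a : M, ((c x (a : G) * (c g (a : G))⁻¹ : ℂˣ) : ℂ) = 1 := by
            intro a
            have hcx : c x (a : G) = c g (a : G) := by
              calc c x (a : G) = c ((x * g⁻¹) * g) (a : G) := by
                    rw [show (x * g⁻¹) * g = x from by group]
                _ = c (x * g⁻¹) (a : G) * c g (a : G) := c_mul_left _ _ _
                _ = 1 * c g (a : G) := by
                    rw [htrivL _ _ ((hmemM _).mp hxg) ((hmemM _).mp a.2)]
                _ = c g (a : G) := one_mul _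
            rw [hcx]
            simp
          rw [hψx, Finset.sum_congr rfl (fun a _ => hone a), Finset.sum_const,
            Finset.card_univ, nsmul_eq_mul, mul_one]
          have hφx : φ x = (χM ⟨x * g⁻¹, hxg⟩ : ℂ) * φ g := by
            have h2 := hφind ⟨x * g⁻¹, hxg⟩ g
            rw [show ((⟨x * g⁻¹, hxg⟩ : M) : G) * g = x from by simp] at h2
            exact h2
          rw [Pi.smul_apply, smul_eq_mul,
            show deltaFun M χM g x = (χM ⟨x * g⁻¹, hxg⟩ : ℂ) from by
              unfold deltaFun; rw [dif_pos hxg],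
            hφx]
          ring
        · have hne : ∃ a : G, a ∈ M ∧ c x a ≠ c g a := by
            have h0 : ¬ ∀ a : G, a ∈ M → c x a = c g a := fun h => hxg (hnondeg x g h)
            push_neg at h0
            exact h0
          obtain ⟨a0, ha0M, ha0⟩ := hne
          have hzero : ∑ a : M, ((c x (a : G) * (c g (a : G))⁻¹ : ℂˣ) : ℂ) = 0 := by
            refine svn_sum_char_eq_zero
              (fun a : M => ((c x (a : G) * (c g (a : G))⁻¹ : ℂˣ) : ℂ)) ?_
              (b := ⟨a0, ha0M⟩) ?_
            · intro u v
              show ((c x ((u * v : M) : G) * (c g ((u * v : M) : G))⁻¹ : ℂˣ) : ℂ) = _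
              rw [Subgroup.coe_mul, c_mul_right, c_mul_right, mul_inv, ← Units.val_mul]
              congr 1
              exact mul_mul_mul_comm _ _ _ _
            · intro h
              apply ha0
              have hu : (c x a0 * (c g a0)⁻¹ : ℂˣ) = 1 :=
                Units.ext (h.trans Units.val_one.symm)
              exact mul_inv_eq_one.mp hu
          rw [hψx, hzero, zero_mul, Pi.smul_apply, smul_eq_mul,
            show deltaFun M χM g x = 0 from by unfold deltaFun; rw [dif_neg hxg], mul_zero]
      have hcard : ((Fintype.card M : ℂ) * φ g) ≠ 0 :=
        mul_ne_zero (Nat.cast_ne_zero.mpr Fintype.card_ne_zero) hg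
      have hδ : deltaFun M χM g = ((Fintype.card M : ℂ) * φ g)⁻¹ • ψ := by
        rw [hψeq, smul_smul, inv_mul_cancel₀ hcard, one_smul]
      rw [hδ]
      exact Submodule.smul_mem U _ hψU
    have hdelta_all : ∀ h : G, deltaFun M χM h ∈ U := by
      intro h
      have htr := hUinv (h⁻¹ * g) (deltaFun M χM g) hdg
      have heq : deltaFun M χM h = fun x => deltaFun M χM g (x * (h⁻¹ * g)) := by
        funext x
        unfold deltaFun
        rw [show x * (h⁻¹ * g) * g⁻¹ = x * h⁻¹ from by group]
      rw [heq]
      exact htr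
    refine le_antisymm hUle (fun ψ hψmem => ?_)
    set n : ℕ := (Finset.univ.filter (fun k : G => k ∈ M)).card with hn
    have hn0 : (n : ℂ) ≠ 0 := by
      have hpos : 0 < n := Finset.card_pos.mpr ⟨1, by simp [one_mem]⟩
      exact_mod_cast hpos.ne'
    have hrepr : (∑ h : G, ψ h • deltaFun M χM h) = (n : ℂ) • ψ := by
      funext x
      rw [Finset.sum_apply]
      have hterm : ∀ h : G, (ψ h • deltaFun M χM h) x = if x * h⁻¹ ∈ M then ψ x else 0 := by
        intro h
        rw [Pi.smul_apply, smul_eq_mul]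
        unfold deltaFun
        by_cases hm : x * h⁻¹ ∈ M
        · rw [dif_pos hm, if_pos hm]
          have h2 := hψmem ⟨x * h⁻¹, hm⟩ h
          rw [show ((⟨x * h⁻¹, hm⟩ : M) : G) * h = x from by simp] at h2
          rw [h2]
          ring
        · rw [dif_neg hm, if_neg hm, mul_zero]
      rw [Finset.sum_congr rfl (fun h _ => hterm h)]
      have hre : ∑ h : G, (if x * h⁻¹ ∈ M then ψ x else 0)
          = ∑ k : G, (if k ∈ M then ψ x else 0) := by
        refine Fintype.sum_equiv ((Equiv.inv G).trans (Equiv.mulLeft x)) _ _ (fun k => ?_)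
        rw [show ((Equiv.inv G).trans (Equiv.mulLeft x)) k = x * k⁻¹ from rfl]
      rw [hre, Finset.sum_ite, Finset.sum_const, Finset.sum_const_zero, add_zero,
        nsmul_eq_mul, Pi.smul_apply, smul_eq_mul]
    have hfin : ψ = (n : ℂ)⁻¹ • ∑ h : G, ψ h • deltaFun M χM h := by
      rw [hrepr, smul_smul, inv_mul_cancel₀ hn0, one_smul]
    rw [hfin]
    exact Submodule.smul_mem U _
      (Submodule.sum_mem U fun h _ => Submodule.smul_mem U _ (hdelta_all h))
end

section
/- In the setting of the previous statement, any two irreducible representations of the finite group G with the same central character χ (injective on [G,G]) are isomorphic, and such a representation has dimension √[G:Z]. -/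
open Module LinearMap TensorProduct
open scoped commutatorElement


section Aux

variable {G : Type} [Group G] {V W : Type}
  [AddCommGroup V] [Module ℂ V] [AddCommGroup W] [Module ℂ W]

/-- finite dimensionality of irreducible reps of finite groups -/
lemma aux_fd [Finite G] [Nontrivial V] (ρ : Representation ℂ G V)
    (hirr : ∀ U : Submodule ℂ V, (∀ g : G, ∀ v ∈ U, ρ g v ∈ U) → U = ⊥ ∨ U = ⊤) :
    FiniteDimensional ℂ V := by
  obtain ⟨v, hv⟩ := exists_ne (0 : V)
  set U : Submodule ℂ V := Submodule.span ℂ (Set.range fun g : G => ρ g v) with hUdef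
  have hU : ∀ g : G, ∀ x ∈ U, ρ g x ∈ U := by
    intro g x hx
    have hmap : Submodule.map (ρ g) U ≤ U := by
      rw [hUdef, Submodule.map_span, Submodule.span_le]
      rintro _ ⟨_, ⟨h, rfl⟩, rfl⟩
      apply Submodule.subset_span
      refine ⟨g * h, ?_⟩
      show ρ (g * h) v = ρ g (ρ h v)
      rw [map_mul]; rfl
    exact hmap ⟨x, hx, rfl⟩
  have hfd : FiniteDimensional ℂ U :=
    FiniteDimensional.span_of_finite ℂ (Set.finite_range _)
  rcases hirr U hU with h | h
  · exfalso
    have hvU : v ∈ U := Submodule.subset_span ⟨1, show ρ 1 v = v by rw [map_one]; rfl⟩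
    rw [h] at hvU
    exact hv (by simpa using hvU)
  · rw [h] at hfd
    exact Module.Finite.equiv (Submodule.topEquiv (R := ℂ) (M := V))

/-- Schur: nonzero intertwiner between irreducibles is an equivalence -/
lemma aux_schur_equiv (ρV : Representation ℂ G V) (ρW : Representation ℂ G W)
    (hVirr : ∀ U : Submodule ℂ V, (∀ g : G, ∀ v ∈ U, ρV g v ∈ U) → U = ⊥ ∨ U = ⊤)
    (hWirr : ∀ U : Submodule ℂ W, (∀ g : G, ∀ w ∈ U, ρW g w ∈ U) → U = ⊥ ∨ U = ⊤)
    (f : V →ₗ[ℂ] W) (hf0 : f ≠ 0)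
    (hcomm : ∀ (g : G) (v : V), f (ρV g v) = ρW g (f v)) :
    ∃ e : V ≃ₗ[ℂ] W, ∀ (g : G) (v : V), e (ρV g v) = ρW g (e v) := by
  have hker : LinearMap.ker f = ⊥ := by
    have hinv : ∀ g : G, ∀ v ∈ LinearMap.ker f, ρV g v ∈ LinearMap.ker f := by
      intro g v hvk
      rw [LinearMap.mem_ker] at hvk ⊢
      rw [hcomm, hvk, map_zero]
    rcases hVirr (LinearMap.ker f) hinv with h | h
    · exact h
    · exact absurd (LinearMap.ker_eq_top.mp h) hf0
  have hrange : LinearMap.range f = ⊤ := by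
    have hinv : ∀ g : G, ∀ w ∈ LinearMap.range f, ρW g w ∈ LinearMap.range f := by
      rintro g _ ⟨v, rfl⟩
      exact ⟨ρV g v, hcomm g v⟩
    rcases hWirr (LinearMap.range f) hinv with h | h
    · exact absurd (LinearMap.range_eq_bot.mp h) hf0
    · exact h
  exact ⟨LinearEquiv.ofBijective f ⟨LinearMap.ker_eq_bot.mp hker,
    LinearMap.range_eq_top.mp hrange⟩, fun g v => hcomm g v⟩

/-- Schur: an intertwining endomorphism is scalar -/
lemma aux_schur_scalar [FiniteDimensional ℂ V] [Nontrivial V]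
    (ρV : Representation ℂ G V)
    (hVirr : ∀ U : Submodule ℂ V, (∀ g : G, ∀ v ∈ U, ρV g v ∈ U) → U = ⊥ ∨ U = ⊤)
    (f : V →ₗ[ℂ] V)
    (hcomm : ∀ (g : G) (v : V), f (ρV g v) = ρV g (f v)) :
    ∃ c : ℂ, f = c • LinearMap.id := by
  obtain ⟨c, hc⟩ := Module.End.exists_eigenvalue f
  obtain ⟨v, hv⟩ := hc.exists_hasEigenvector
  have hveq : f v = c • v := hv.apply_eq_smul
  refine ⟨c, ?_⟩
  set g : V →ₗ[ℂ] V := f - c • LinearMap.id with hg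
  have hgker : ∀ x : G, ∀ w ∈ LinearMap.ker g, ρV x w ∈ LinearMap.ker g := by
    intro x w hw
    rw [LinearMap.mem_ker] at hw ⊢
    have : g (ρV x w) = ρV x (g w) := by
      simp only [hg, LinearMap.sub_apply, LinearMap.smul_apply, LinearMap.id_apply,
        hcomm, map_sub, map_smul]
    rw [this, hw, map_zero]
  rcases hVirr (LinearMap.ker g) hgker with h | h
  · exfalso
    have hvk : v ∈ LinearMap.ker g := by
      rw [LinearMap.mem_ker, hg, LinearMap.sub_apply, LinearMap.smul_apply,
        LinearMap.id_apply, hveq, sub_self]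
    rw [h] at hvk
    exact hv.right (by simpa using hvk)
  · have h0 : g = 0 := LinearMap.ker_eq_top.mp h
    rw [hg] at h0
    exact sub_eq_zero.mp h0

end Aux


section Aux2

variable {G : Type} [Group G] {V W : Type}
  [AddCommGroup V] [Module ℂ V] [AddCommGroup W] [Module ℂ W]

/-- trace of linHom action is product of characters -/
lemma aux_trace_linHom [FiniteDimensional ℂ V] [FiniteDimensional ℂ W]
    (ρV : Representation ℂ G V) (ρW : Representation ℂ G W) (g : G) :
    trace ℂ (V →ₗ[ℂ] W) (Representation.linHom ρV ρW g) =
      trace ℂ V (ρV g⁻¹) * trace ℂ W (ρW g) := by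
  set e : Module.Dual ℂ V ⊗[ℂ] W ≃ₗ[ℂ] (V →ₗ[ℂ] W) := dualTensorHomEquiv ℂ V W with he
  have hcoe : ∀ x, dualTensorHom ℂ V W x = e x := by
    intro x
    rw [he, dualTensorHomEquiv]
    rfl
  have hconj : (Representation.linHom ρV ρW) g =
      e.conj (TensorProduct.map (ρV.dual g) (ρW g)) := by
    apply LinearMap.ext
    intro φ
    rw [LinearEquiv.conj_apply_apply]
    have h3 := LinearMap.congr_fun (Representation.dualTensorHom_comm ρV ρW g) (e.symm φ)
    simp only [LinearMap.coe_comp, Function.comp_apply] at h3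
    rw [hcoe, hcoe, e.apply_symm_apply] at h3
    exact h3.symm
  rw [hconj, trace_conj', trace_tensorProduct', Representation.dual_apply, trace_transpose']

/-- character value on central elements -/
lemma aux_char_central [FiniteDimensional ℂ V]
    (ρ : Representation ℂ G V) (χ : Subgroup.center G →* ℂˣ)
    (hχ : ∀ (z : Subgroup.center G) (v : V), ρ (z : G) v = (χ z : ℂ) • v)
    (z : Subgroup.center G) :
    trace ℂ V (ρ (z : G)) = (χ z : ℂ) * finrank ℂ V := by
  have h : ρ (z : G) = (χ z : ℂ) • (LinearMap.id : V →ₗ[ℂ] V) := by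
    apply LinearMap.ext; intro v
    rw [hχ]; rfl
  rw [h, map_smul, trace_id, smul_eq_mul]

/-- character vanishes off the center -/
lemma aux_char_zero (hGZ : ∀ g h : G, ⁅g, h⁆ ∈ Subgroup.center G)
    (χ : Subgroup.center G →* ℂˣ)
    (hχinj : ∀ z : Subgroup.center G,
      (z : G) ∈ commutator G → χ z = 1 → (z : G) = 1)
    (ρ : Representation ℂ G V)
    (hχ : ∀ (z : Subgroup.center G) (v : V), ρ (z : G) v = (χ z : ℂ) • v)
    (g : G) (hg : g ∉ Subgroup.center G) :
    trace ℂ V (ρ g) = 0 := by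
  rw [Subgroup.mem_center_iff] at hg
  push_neg at hg
  obtain ⟨h, hh⟩ := hg
  have hcZ : ⁅h, g⁆ ∈ Subgroup.center G := hGZ h g
  set z : Subgroup.center G := ⟨⁅h, g⁆, hcZ⟩ with hz
  have hc1 : ⁅h, g⁆ ≠ 1 := by
    intro h1
    exact hh (commutatorElement_eq_one_iff_mul_comm.mp h1)
  have hcC : ⁅h, g⁆ ∈ commutator G := by
    rw [commutator_def]
    exact Subgroup.commutator_mem_commutator (Subgroup.mem_top h) (Subgroup.mem_top g)
  have hχc : (χ z : ℂ) ≠ 1 := by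
    intro h1
    apply hc1
    exact hχinj z hcC (Units.ext (by simpa using h1))
  have hkey : h * g * h⁻¹ = ⁅h, g⁆ * g := by group
  have t1 : trace ℂ V (ρ (h * g * h⁻¹)) = trace ℂ V (ρ g) := by
    rw [show ρ (h * g * h⁻¹) = ρ h * ρ g * ρ h⁻¹ by rw [map_mul, map_mul]]
    rw [trace_mul_comm, ← mul_assoc, ← map_mul, inv_mul_cancel, map_one, one_mul]
  have t2 : trace ℂ V (ρ (⁅h, g⁆ * g)) = (χ z : ℂ) * trace ℂ V (ρ g) := by
    have hsc : ρ (⁅h, g⁆ * g) = (χ z : ℂ) • ρ g := by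
      apply LinearMap.ext; intro v
      rw [map_mul, Module.End.mul_apply]
      have : ρ ⁅h, g⁆ (ρ g v) = (χ z : ℂ) • (ρ g v) := hχ z (ρ g v)
      simpa using this
    rw [hsc, map_smul, smul_eq_mul]
  rw [hkey, t2] at t1
  by_contra ht
  exact hχc (mul_right_cancel₀ ht (by rw [t1, one_mul]))

end Aux2


section Aux3

variable {G : Type} [Group G] {V W : Type}
  [AddCommGroup V] [Module ℂ V] [AddCommGroup W] [Module ℂ W]

lemma aux_mem_inv_comm (ρV : Representation ℂ G V) (ρW : Representation ℂ G W)
    (f : V →ₗ[ℂ] W) (hf : f ∈ (Representation.linHom ρV ρW).invariants) :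
    ∀ (g : G) (v : V), f (ρV g v) = ρW g (f v) := by
  intro g v
  rw [Representation.mem_invariants] at hf
  have h2 := congrArg (fun (u : V →ₗ[ℂ] W) => u (ρV g v)) (hf g)
  simp only [Representation.linHom_apply, LinearMap.coe_comp, Function.comp_apply] at h2
  have h3 : ρV g⁻¹ (ρV g v) = v := by
    rw [← Module.End.mul_apply, ← map_mul, inv_mul_cancel, map_one]; rfl
  rw [h3] at h2
  exact h2.symm

lemma aux_count [Fintype G] [Invertible (Fintype.card G : ℂ)]
    [FiniteDimensional ℂ V] [FiniteDimensional ℂ W]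
    (hGZ : ∀ g h : G, ⁅g, h⁆ ∈ Subgroup.center G)
    (χ : Subgroup.center G →* ℂˣ)
    (hχinj : ∀ z : Subgroup.center G,
      (z : G) ∈ commutator G → χ z = 1 → (z : G) = 1)
    (ρV : Representation ℂ G V) (ρW : Representation ℂ G W)
    (hVχ : ∀ (z : Subgroup.center G) (v : V), ρV (z : G) v = (χ z : ℂ) • v)
    (hWχ : ∀ (z : Subgroup.center G) (w : W), ρW (z : G) w = (χ z : ℂ) • w) :
    (Nat.card (Subgroup.center G) : ℂ) * ((finrank ℂ V : ℂ) * (finrank ℂ W : ℂ)) =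
      (Fintype.card G : ℂ) * (finrank ℂ (Representation.linHom ρV ρW).invariants : ℂ) := by
  classical
  have key : ⅟(Fintype.card G : ℂ) •
      ∑ g : G, trace ℂ (V →ₗ[ℂ] W) ((Representation.linHom ρV ρW) g) =
      (finrank ℂ (Representation.linHom ρV ρW).invariants : ℂ) := by
    rw [← (Representation.isProj_averageMap (Representation.linHom ρV ρW)).trace]
    simp [GroupAlgebra.average, _root_.map_sum]
  have hterm : ∀ g : G, trace ℂ (V →ₗ[ℂ] W) ((Representation.linHom ρV ρW) g) =
      if g ∈ Subgroup.center G then ((finrank ℂ V : ℂ) * (finrank ℂ W : ℂ)) else 0 := by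
    intro g
    rw [aux_trace_linHom]
    by_cases hg : g ∈ Subgroup.center G
    · rw [if_pos hg]
      set z : Subgroup.center G := ⟨g, hg⟩ with hzdef
      have h1 : trace ℂ V (ρV g⁻¹) = ((χ z⁻¹ : ℂˣ) : ℂ) * (finrank ℂ V : ℂ) :=
        aux_char_central ρV χ hVχ z⁻¹
      have h2 : trace ℂ W (ρW g) = ((χ z : ℂˣ) : ℂ) * (finrank ℂ W : ℂ) :=
        aux_char_central ρW χ hWχ z
      rw [h1, h2]
      have h3 : ((χ z⁻¹ : ℂˣ) : ℂ) * ((χ z : ℂˣ) : ℂ) = 1 := by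
        rw [← Units.val_mul, ← map_mul, inv_mul_cancel, map_one, Units.val_one]
      calc ((χ z⁻¹ : ℂˣ) : ℂ) * (finrank ℂ V : ℂ) * (((χ z : ℂˣ) : ℂ) * (finrank ℂ W : ℂ))
          = ((χ z⁻¹ : ℂˣ) : ℂ) * ((χ z : ℂˣ) : ℂ) * ((finrank ℂ V : ℂ) * (finrank ℂ W : ℂ)) := by
            ring
        _ = (finrank ℂ V : ℂ) * (finrank ℂ W : ℂ) := by rw [h3, one_mul]
    · rw [if_neg hg, aux_char_zero hGZ χ hχinj ρW hWχ g hg, mul_zero]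
  have hcard : (Finset.univ.filter (fun g : G => g ∈ Subgroup.center G)).card =
      Nat.card (Subgroup.center G) := by
    rw [Nat.card_eq_fintype_card, Fintype.card_subtype]
  have hsum : ∑ g : G, trace ℂ (V →ₗ[ℂ] W) ((Representation.linHom ρV ρW) g) =
      (Nat.card (Subgroup.center G) : ℂ) * ((finrank ℂ V : ℂ) * (finrank ℂ W : ℂ)) := by
    rw [Finset.sum_congr rfl (fun g _ => hterm g), ← Finset.sum_filter,
      Finset.sum_const, hcard, nsmul_eq_mul]
  rw [hsum] at key
  calc (Nat.card (Subgroup.center G) : ℂ) * ((finrank ℂ V : ℂ) * (finrank ℂ W : ℂ))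
      = (Fintype.card G : ℂ) * (⅟(Fintype.card G : ℂ) •
        ((Nat.card (Subgroup.center G) : ℂ) * ((finrank ℂ V : ℂ) * (finrank ℂ W : ℂ)))) := by
        rw [smul_eq_mul, mul_invOf_cancel_left]
    _ = (Fintype.card G : ℂ) * (finrank ℂ (Representation.linHom ρV ρW).invariants : ℂ) := by
        rw [key]

end Aux3

/-- let `G` be a finite group with `[G,G] ⊆ Z = Z(G)` and
`χ : Z → ℂˣ` a character injective on `[G,G]`.  Any two irreducible
representations of `G` with central character `χ` are isomorphic (via an
intertwining linear isomorphism), and such a representation has dimension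
`√[G:Z]`, i.e. `(dim)² = [G:Z]`. -/
theorem covers_of_tori_stmt11 (G : Type) [Group G] [Finite G]
    (hGZ : ∀ g h : G, ⁅g, h⁆ ∈ Subgroup.center G)
    (χ : Subgroup.center G →* ℂˣ)
    (hχinj : ∀ z : Subgroup.center G,
      (z : G) ∈ commutator G → χ z = 1 → (z : G) = 1)
    (V W : Type) [AddCommGroup V] [Module ℂ V] [AddCommGroup W] [Module ℂ W]
    [Nontrivial V] [Nontrivial W]
    (ρV : Representation ℂ G V) (ρW : Representation ℂ G W)
    -- irreducibility:
    (hVirr : ∀ U : Submodule ℂ V, (∀ g : G, ∀ v ∈ U, ρV g v ∈ U) →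
      U = ⊥ ∨ U = ⊤)
    (hWirr : ∀ U : Submodule ℂ W, (∀ g : G, ∀ w ∈ U, ρW g w ∈ U) →
      U = ⊥ ∨ U = ⊤)
    -- both have central character `χ`:
    (hVχ : ∀ (z : Subgroup.center G) (v : V), ρV (z : G) v = (χ z : ℂ) • v)
    (hWχ : ∀ (z : Subgroup.center G) (w : W), ρW (z : G) w = (χ z : ℂ) • w) :
    (∃ e : V ≃ₗ[ℂ] W, ∀ (g : G) (v : V), e (ρV g v) = ρW g (e v)) ∧
    finrank ℂ V * finrank ℂ V = (Subgroup.center G).index := by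
  haveI : FiniteDimensional ℂ V := aux_fd ρV hVirr
  haveI : FiniteDimensional ℂ W := aux_fd ρW hWirr
  haveI : Fintype G := Fintype.ofFinite G
  haveI : Invertible (Fintype.card G : ℂ) :=
    invertibleOfNonzero (by exact_mod_cast Fintype.card_ne_zero)
  have hZpos : 0 < Nat.card (Subgroup.center G) := Nat.card_pos
  constructor
  · -- existence of intertwining equivalence
    have heq := aux_count hGZ χ hχinj ρV ρW hVχ hWχ
    have hfrne : finrank ℂ ((Representation.linHom ρV ρW).invariants) ≠ 0 := by
      intro h0
      rw [h0] at heq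
      simp only [Nat.cast_zero, mul_zero] at heq
      have h1 : (Nat.card (Subgroup.center G) : ℂ) ≠ 0 := by
        exact_mod_cast hZpos.ne'
      have h2 : (finrank ℂ V : ℂ) ≠ 0 := by
        exact_mod_cast (Module.finrank_pos (R := ℂ) (M := V)).ne'
      have h3 : (finrank ℂ W : ℂ) ≠ 0 := by
        exact_mod_cast (Module.finrank_pos (R := ℂ) (M := W)).ne'
      exact (mul_ne_zero h1 (mul_ne_zero h2 h3)) heq
    have hne_bot : (Representation.linHom ρV ρW).invariants ≠ ⊥ := by
      intro hbot
      rw [hbot] at hfrne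
      exact hfrne (finrank_bot ℂ _)
    obtain ⟨f, hfmem, hf0⟩ := Submodule.ne_bot_iff _ |>.mp hne_bot
    exact aux_schur_equiv ρV ρW hVirr hWirr f hf0 (aux_mem_inv_comm ρV ρW f hfmem)
  · -- dimension formula
    have heq := aux_count hGZ χ hχinj ρV ρV hVχ hVχ
    have hid0 : (LinearMap.id : V →ₗ[ℂ] V) ≠ 0 := by
      obtain ⟨v, hv⟩ := exists_ne (0 : V)
      intro h
      apply hv
      calc v = (LinearMap.id : V →ₗ[ℂ] V) v := rfl
        _ = (0 : V →ₗ[ℂ] V) v := by rw [h]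
        _ = 0 := rfl
    have hinv_eq : (Representation.linHom ρV ρV).invariants =
        Submodule.span ℂ {(LinearMap.id : V →ₗ[ℂ] V)} := by
      apply le_antisymm
      · intro f hf
        obtain ⟨c, hc⟩ := aux_schur_scalar ρV hVirr f (aux_mem_inv_comm ρV ρV f hf)
        rw [Submodule.mem_span_singleton]
        exact ⟨c, hc.symm⟩
      · rw [Submodule.span_le, Set.singleton_subset_iff]
        intro g
        apply LinearMap.ext
        intro v
        simp only [Representation.linHom_apply, LinearMap.coe_comp, Function.comp_apply,
          LinearMap.id_apply]
        rw [← Module.End.mul_apply, ← map_mul, mul_inv_cancel, map_one]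
        rfl
    have hfr1 : finrank ℂ ((Representation.linHom ρV ρV).invariants) = 1 := by
      rw [hinv_eq]
      exact finrank_span_singleton hid0
    rw [hfr1] at heq
    have hnat : Nat.card (Subgroup.center G) * (finrank ℂ V * finrank ℂ V) =
        Fintype.card G := by
      have : ((Nat.card (Subgroup.center G) * (finrank ℂ V * finrank ℂ V) : ℕ) : ℂ) =
          ((Fintype.card G : ℕ) : ℂ) := by
        push_cast
        rw [heq]
        ring
      exact_mod_cast this
    have hindex : Nat.card (Subgroup.center G) * (Subgroup.center G).index = Fintype.card G := by
      rw [← Nat.card_eq_fintype_card]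
      exact Subgroup.card_mul_index _
    apply Nat.eq_of_mul_eq_mul_left hZpos
    rw [hnat, hindex]
end

section
/- Let G be a finite group with [G,G] ⊆ Z = Z(G), χ : Z → ℂˣ injective on [G,G], and π the irreducible representation of G with central character χ. Then the character of π satisfies: Tr π(g) = √[G:Z] · χ(g) if g ∈ Z, and Tr π(g) = 0 if g ∉ Z. -/
open Module
open scoped commutatorElement

/-- let `G` be a finite group with `[G,G] ⊆ Z = Z(G)`,
`χ : Z → ℂˣ` injective on `[G,G]`, and `π = (ρ, V)` the irreducible
representation of `G` with central character `χ`.  Then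
`Tr π(g) = √[G:Z] · χ(g)` for `g ∈ Z` (the dimension of `π` being `√[G:Z]`),
and `Tr π(g) = 0` for `g ∉ Z`. -/
theorem covers_of_tori_stmt12 (G : Type) [Group G] [Finite G]
    (hGZ : ∀ g h : G, ⁅g, h⁆ ∈ Subgroup.center G)
    (χ : Subgroup.center G →* ℂˣ)
    (hχinj : ∀ z : Subgroup.center G,
      (z : G) ∈ commutator G → χ z = 1 → (z : G) = 1)
    (V : Type) [AddCommGroup V] [Module ℂ V] [Nontrivial V]
    (ρ : Representation ℂ G V)
    (hirr : ∀ U : Submodule ℂ V, (∀ g : G, ∀ v ∈ U, ρ g v ∈ U) →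
      U = ⊥ ∨ U = ⊤)
    (hχ : ∀ (z : Subgroup.center G) (v : V), ρ (z : G) v = (χ z : ℂ) • v) :
    finrank ℂ V * finrank ℂ V = (Subgroup.center G).index ∧
    (∀ (g : G) (hg : g ∈ Subgroup.center G),
      LinearMap.trace ℂ V (ρ g) = (finrank ℂ V : ℂ) * (χ ⟨g, hg⟩ : ℂ)) ∧
    (∀ g : G, g ∉ Subgroup.center G → LinearMap.trace ℂ V (ρ g) = 0) := by
  classical
  cases nonempty_fintype G
  -- Finite dimensionality
  have hfd : FiniteDimensional ℂ V := by
    obtain ⟨v, hv⟩ := exists_ne (0 : V)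
    set U : Submodule ℂ V := Submodule.span ℂ (Set.range fun g : G => ρ g v) with hUdef
    have hinv : ∀ g : G, ∀ w ∈ U, ρ g w ∈ U := by
      intro g w hw
      induction hw using Submodule.span_induction with
      | mem x hx =>
        obtain ⟨h, rfl⟩ := hx
        rw [← Module.End.mul_apply, ← map_mul]
        exact Submodule.subset_span ⟨g * h, rfl⟩
      | zero => simp
      | add x y _ _ hx hy => rw [map_add]; exact U.add_mem hx hy
      | smul c x _ hx => rw [map_smul]; exact U.smul_mem c hx
    have hUtop : U = ⊤ := by
      rcases hirr U hinv with h | h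
      · exfalso
        apply hv
        have hvU : v ∈ U := by
          have : ρ (1 : G) v ∈ U := Submodule.subset_span ⟨1, rfl⟩
          simpa using this
        rw [h] at hvU
        simpa using hvU
      · exact h
    have : FiniteDimensional ℂ U :=
      FiniteDimensional.span_of_finite ℂ (Set.finite_range _)
    rw [hUtop] at this
    exact Module.Finite.equiv (Submodule.topEquiv)
  have hn0 : (finrank ℂ V : ℂ) ≠ 0 := Nat.cast_ne_zero.mpr finrank_pos.ne'


  -- central elements act by scalars (as linear maps)
  have hcent : ∀ (g : G) (hg : g ∈ Subgroup.center G),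
      ρ g = (χ ⟨g, hg⟩ : ℂ) • (LinearMap.id : V →ₗ[ℂ] V) := by
    intro g hg
    ext v
    exact hχ ⟨g, hg⟩ v
  have part2 : ∀ (g : G) (hg : g ∈ Subgroup.center G),
      LinearMap.trace ℂ V (ρ g) = (finrank ℂ V : ℂ) * (χ ⟨g, hg⟩ : ℂ) := by
    intro g hg
    rw [hcent g hg, map_smul, LinearMap.trace_id, smul_eq_mul]
    ring
  -- traces are conjugation invariant
  have hconj : ∀ g h : G, LinearMap.trace ℂ V (ρ (h * g * h⁻¹)) = LinearMap.trace ℂ V (ρ g) := by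
    intro g h
    have : ρ (h * g * h⁻¹) = ρ h * ρ (g * h⁻¹) := by rw [← map_mul, mul_assoc]
    rw [this, LinearMap.trace_mul_comm, ← map_mul]
    congr 2
    group
  have part3 : ∀ g : G, g ∉ Subgroup.center G → LinearMap.trace ℂ V (ρ g) = 0 := by
    intro g hg
    obtain ⟨h, hh⟩ : ∃ h : G, ¬ (h * g = g * h) := by
      by_contra hc
      push_neg at hc
      exact hg (Subgroup.mem_center_iff.mpr hc)
    have hz : ⁅h, g⁆ ∈ Subgroup.center G := hGZ h g
    have hzne : ⁅h, g⁆ ≠ 1 := fun e => hh (commutatorElement_eq_one_iff_mul_comm.mp e)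
    have hzc : (⁅h, g⁆ : G) ∈ commutator G := by
      rw [commutator_def]
      exact Subgroup.commutator_mem_commutator (Subgroup.mem_top h) (Subgroup.mem_top g)
    have hchi : (χ ⟨⁅h, g⁆, hz⟩ : ℂ) ≠ 1 := by
      intro e
      exact hzne (hχinj ⟨⁅h, g⁆, hz⟩ hzc (Units.val_eq_one.mp e))
    have key : LinearMap.trace ℂ V (ρ g) =
        (χ ⟨⁅h, g⁆, hz⟩ : ℂ) * LinearMap.trace ℂ V (ρ g) := by
      conv_lhs => rw [← hconj g h]
      have h1 : h * g * h⁻¹ = ⁅h, g⁆ * g := by group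
      rw [h1, map_mul, hcent _ hz, smul_mul_assoc, map_smul, smul_eq_mul]
      rw [show (LinearMap.id : V →ₗ[ℂ] V) * ρ g = ρ g from one_mul _]
    have := sub_eq_zero.mpr key.symm
    rw [← sub_one_mul] at this
    rcases mul_eq_zero.mp this with h' | h'
    · exact absurd (by linear_combination h') hchi
    · exact h'
  -- Schur's lemma
  have schur : ∀ S : V →ₗ[ℂ] V, (∀ g : G, ρ g * S = S * ρ g) →
      ∃ c : ℂ, S = c • (LinearMap.id : V →ₗ[ℂ] V) := by
    intro S hS
    obtain ⟨c, hc⟩ := Module.End.exists_eigenvalue (S : Module.End ℂ V)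
    refine ⟨c, ?_⟩
    have hne : Module.End.eigenspace S c ≠ ⊥ := hc
    have hinv : ∀ g : G, ∀ v ∈ Module.End.eigenspace S c, ρ g v ∈ Module.End.eigenspace S c := by
      intro g v hv
      rw [Module.End.mem_eigenspace_iff] at hv ⊢
      have : S (ρ g v) = ρ g (S v) := by
        rw [← Module.End.mul_apply, ← hS, Module.End.mul_apply]
      rw [this, hv, map_smul]
    have htop : Module.End.eigenspace S c = ⊤ := by
      rcases hirr _ hinv with h | h
      · exact absurd h hne
      · exact h
    ext v
    have hv : v ∈ Module.End.eigenspace S c := htop ▸ Submodule.mem_top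
    simpa using Module.End.mem_eigenspace_iff.mp hv
  -- averaging operator
  have key : ∀ A : V →ₗ[ℂ] V, ∃ c : ℂ,
      (∑ g : G, ρ g * A * ρ g⁻¹) = c • (LinearMap.id : V →ₗ[ℂ] V) ∧
      (finrank ℂ V : ℂ) * c = (Fintype.card G : ℂ) * LinearMap.trace ℂ V A := by
    intro A
    have hcomm : ∀ g : G, ρ g * (∑ h : G, ρ h * A * ρ h⁻¹) = (∑ h : G, ρ h * A * ρ h⁻¹) * ρ g := by
      intro g
      rw [Finset.mul_sum, Finset.sum_mul]
      rw [← Equiv.sum_comp (Equiv.mulLeft g) (fun h => ρ h * A * ρ h⁻¹ * ρ g)]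
      apply Finset.sum_congr rfl
      intro h _
      simp only [Equiv.coe_mulLeft]
      have e1 : ρ ((g * h)⁻¹) * ρ g = ρ h⁻¹ := by
        rw [← map_mul]; congr 1; group
      calc ρ g * (ρ h * A * ρ h⁻¹) = ρ (g * h) * A * ρ h⁻¹ := by
            rw [map_mul]; noncomm_ring
        _ = ρ (g * h) * A * (ρ ((g * h)⁻¹) * ρ g) := by rw [e1]
        _ = ρ (g * h) * A * ρ ((g * h)⁻¹) * ρ g := by noncomm_ring
    obtain ⟨c, hc⟩ := schur _ hcomm
    refine ⟨c, hc, ?_⟩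
    have ht := congrArg (LinearMap.trace ℂ V) hc
    rw [map_sum, map_smul, LinearMap.trace_id] at ht
    have h1 : ∀ g : G, LinearMap.trace ℂ V (ρ g * A * ρ g⁻¹) = LinearMap.trace ℂ V A := by
      intro g
      rw [LinearMap.trace_mul_comm, ← mul_assoc, ← map_mul, inv_mul_cancel, map_one, one_mul]
    rw [Finset.sum_congr rfl (fun g _ => h1 g), Finset.sum_const, Finset.card_univ,
      nsmul_eq_mul] at ht
    rw [smul_eq_mul] at ht
    linear_combination -ht

  -- matrix coefficients
  set n := finrank ℂ V with hn
  let b : Basis (Fin n) ℂ V := finBasis ℂ V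
  let M : G → Matrix (Fin n) (Fin n) ℂ := fun g => LinearMap.toMatrix b b (ρ g)
  have hentry : ∀ i j : Fin n,
      (n : ℂ) * (∑ g : G, M g i i * M g⁻¹ j j) =
      (Fintype.card G : ℂ) * ((if i = j then (1:ℂ) else 0) * (if i = j then (1:ℂ) else 0)) := by
    intro i j
    obtain ⟨c, hc1, hc2⟩ := key (Matrix.toLin b b (Matrix.single i j 1))
    have htrE : LinearMap.trace ℂ V (Matrix.toLin b b (Matrix.single i j 1)) =
        (if i = j then (1:ℂ) else 0) := by
      rw [LinearMap.trace_eq_matrix_trace ℂ b, LinearMap.toMatrix_toLin]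
      simp only [Matrix.trace, Matrix.diag, Matrix.single, Matrix.of_apply]
      rw [Finset.sum_eq_single i]
      · simp [eq_comm]
      · intro k _ hk
        simp [hk.symm]
      · simp
    have hterm : ∀ g : G,
        LinearMap.toMatrix b b (ρ g * Matrix.toLin b b (Matrix.single i j 1) * ρ g⁻¹) =
        M g * Matrix.single i j 1 * M g⁻¹ := by
      intro g
      rw [LinearMap.toMatrix_mul, LinearMap.toMatrix_mul, LinearMap.toMatrix_toLin]
    have hval : ∀ g : G, (M g * Matrix.single i j (1:ℂ) * M g⁻¹
        : Matrix (Fin n) (Fin n) ℂ) i j = M g i i * M g⁻¹ j j := by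
      intro g
      rw [Matrix.mul_assoc, Matrix.mul_apply]
      rw [Finset.sum_eq_single i]
      · rw [Matrix.single_mul_apply_same, one_mul]
      · intro k _ hk
        rw [Matrix.single_mul_apply_of_ne (1:ℂ) i j k j hk]
        simp
      · simp
    have hmat2 : (∑ g : G, M g i i * M g⁻¹ j j) = c * (if i = j then (1:ℂ) else 0) := by
      calc (∑ g : G, M g i i * M g⁻¹ j j)
          = ∑ g : G, (LinearMap.toMatrix b b
              (ρ g * Matrix.toLin b b (Matrix.single i j 1) * ρ g⁻¹)) i j := by
            refine Finset.sum_congr rfl fun g _ => ?_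
            rw [hterm, hval]
        _ = (∑ g : G, LinearMap.toMatrix b b
              (ρ g * Matrix.toLin b b (Matrix.single i j 1) * ρ g⁻¹)) i j := by
            rw [Matrix.sum_apply]
        _ = (LinearMap.toMatrix b b ((c : ℂ) • (LinearMap.id : V →ₗ[ℂ] V))) i j := by
            rw [← map_sum, hc1]
        _ = c * (if i = j then (1:ℂ) else 0) := by
            rw [map_smul, LinearMap.toMatrix_id, Matrix.smul_apply, Matrix.one_apply, smul_eq_mul]
    rw [htrE] at hc2
    rw [hmat2, ← mul_assoc, hc2, mul_assoc]
  have htr : ∀ g : G, LinearMap.trace ℂ V (ρ g) = ∑ i : Fin n, M g i i := by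
    intro g
    rw [LinearMap.trace_eq_matrix_trace ℂ b]
    rfl
  have horth : (n : ℂ) * (∑ g : G, LinearMap.trace ℂ V (ρ g) * LinearMap.trace ℂ V (ρ g⁻¹)) =
      (n : ℂ) * (Fintype.card G : ℂ) := by
    have e1 : ∀ g : G, LinearMap.trace ℂ V (ρ g) * LinearMap.trace ℂ V (ρ g⁻¹)
        = ∑ i : Fin n, ∑ j : Fin n, M g i i * M g⁻¹ j j := by
      intro g
      rw [htr, htr, Finset.sum_mul_sum]
    calc (n:ℂ) * (∑ g : G, LinearMap.trace ℂ V (ρ g) * LinearMap.trace ℂ V (ρ g⁻¹))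
        = (n:ℂ) * ∑ i : Fin n, ∑ g : G, ∑ j : Fin n, M g i i * M g⁻¹ j j := by
          rw [Finset.sum_congr rfl fun g _ => e1 g, Finset.sum_comm]
      _ = (n:ℂ) * ∑ i : Fin n, ∑ j : Fin n, ∑ g : G, M g i i * M g⁻¹ j j := by
          rw [Finset.sum_congr rfl fun (i : Fin n) _ => Finset.sum_comm]
      _ = ∑ i : Fin n, ∑ j : Fin n, (n:ℂ) * ∑ g : G, M g i i * M g⁻¹ j j := by
          rw [Finset.mul_sum]
          exact Finset.sum_congr rfl fun i _ => Finset.mul_sum _ _ _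
      _ = ∑ i : Fin n, ∑ j : Fin n, (Fintype.card G : ℂ) *
            ((if i = j then (1:ℂ) else 0) * (if i = j then (1:ℂ) else 0)) :=
          Finset.sum_congr rfl fun i _ => Finset.sum_congr rfl fun j _ => hentry i j
      _ = ∑ _i : Fin n, (Fintype.card G : ℂ) := by
          refine Finset.sum_congr rfl fun i _ => ?_
          rw [Finset.sum_eq_single i]
          · simp
          · intro k _ hk
            simp [Ne.symm hk]
          · simp
      _ = (n:ℂ) * (Fintype.card G : ℂ) := by
          rw [Finset.sum_const, Finset.card_univ, Fintype.card_fin, nsmul_eq_mul]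
  have hS : (∑ g : G, LinearMap.trace ℂ V (ρ g) * LinearMap.trace ℂ V (ρ g⁻¹)) =
      (Fintype.card G : ℂ) := mul_left_cancel₀ hn0 horth
  have hSval : (∑ g : G, LinearMap.trace ℂ V (ρ g) * LinearMap.trace ℂ V (ρ g⁻¹)) =
      (Fintype.card (Subgroup.center G) : ℂ) * ((n:ℂ) * (n:ℂ)) := by
    have e : ∀ g : G, LinearMap.trace ℂ V (ρ g) * LinearMap.trace ℂ V (ρ g⁻¹) =
        if g ∈ Subgroup.center G then ((n:ℂ) * (n:ℂ)) else 0 := by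
      intro g
      by_cases hg : g ∈ Subgroup.center G
      · have hg' : g⁻¹ ∈ Subgroup.center G := inv_mem hg
        rw [if_pos hg, part2 g hg, part2 g⁻¹ hg']
        have hone : (χ ⟨g, hg⟩ : ℂ) * (χ ⟨g⁻¹, hg'⟩ : ℂ) = 1 := by
          have h1 : (⟨g⁻¹, hg'⟩ : Subgroup.center G) = (⟨g, hg⟩ : Subgroup.center G)⁻¹ := rfl
          rw [h1, map_inv]
          exact_mod_cast Units.mul_inv (χ ⟨g, hg⟩)
        linear_combination ((n:ℂ) * (n:ℂ)) * hone
      · rw [if_neg hg, part3 g hg, zero_mul]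
    rw [Finset.sum_congr rfl fun g _ => e g, ← Finset.sum_filter, Finset.sum_const, nsmul_eq_mul]
    congr 2
    rw [Fintype.card_subtype]
  have hnat : n * n * Fintype.card (Subgroup.center G) = Fintype.card G := by
    have hC : ((n * n * Fintype.card (Subgroup.center G) : ℕ) : ℂ) =
        ((Fintype.card G : ℕ) : ℂ) := by
      push_cast
      rw [← hS, hSval]
      ring
    exact_mod_cast hC
  refine ⟨?_, part2, part3⟩
  have h2 := Subgroup.card_mul_index (Subgroup.center G)
  rw [Nat.card_eq_fintype_card, Nat.card_eq_fintype_card] at h2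
  have hpos : 0 < Fintype.card (Subgroup.center G) := Fintype.card_pos
  apply Nat.eq_of_mul_eq_mul_right hpos
  rw [hnat, ← h2]
  ring
end
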